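/- Let 𝔇 ≥ 1 be an integer, p an odd prime not dividing 𝔇, and x, y, n integers with p ∤ n. Suppose c₁, c₂, d₁, d₂ are integers satisfying A·x² + B·y² + C·x + D·y + E ≡ n (mod p), where A = c₁² + 𝔇c₂², B = 𝔇A, C = 2(c₁d₁ + 𝔇c₂d₂), D = 2𝔇(c₁d₂ − c₂d₁), E = A + d₁² + 𝔇d₂². Then the images c = c₁ + c₂√−𝔇 and d = d₁ + d₂√−𝔇 in R = ℤ[√−𝔇]/(p) form a unimodular pair: there exist a, b ∈ R with a·d − b·c = 1. -/

import Mathlib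

/-- The ring `ℤ[√−𝔇]`, modelled as `ℤ[X]/(X² + 𝔇)`. -/
abbrev ZsqrtNeg (𝔇 : ℕ) : Type := AdjoinRoot ((Polynomial.X : Polynomial ℤ) ^ 2 + Polynomial.C (𝔇 : ℤ))

/-- The quotient ring `R = ℤ[√−𝔇]/(p)`. -/
abbrev Rmod (𝔇 p : ℕ) : Type := ZsqrtNeg 𝔇 ⧸ Ideal.span {(p : ZsqrtNeg 𝔇)}

/-- The image of `u + v√−𝔇` in `R = ℤ[√−𝔇]/(p)`. -/
noncomputable def toRmod (𝔇 p : ℕ) (u v : ℤ) : Rmod 𝔇 p :=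
  Ideal.Quotient.mk (Ideal.span {(p : ZsqrtNeg 𝔇)})
    ((u : ZsqrtNeg 𝔇) + (v : ZsqrtNeg 𝔇) * AdjoinRoot.root _)

/-- For `𝔇 ≥ 1`, an odd prime `p ∤ 𝔇` and integers `x, y, n` with `p ∤ n`, if integers
`c₁, c₂, d₁, d₂` satisfy `A x² + B y² + C x + D y + E ≡ n (mod p)` (with the coefficients
of the shifted binary quadratic form), then `(c₁ + c₂√−𝔇, d₁ + d₂√−𝔇)` is a
unimodular pair in `R = ℤ[√−𝔇]/(p)`. -/
theorem solution_is_unimodular (𝔇 : ℕ) (h𝔇 : 1 ≤ 𝔇) (p : ℕ) (hp : p.Prime) (hodd : Odd p)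
    (hpD : ¬ p ∣ 𝔇) (x y n : ℤ) (hn : ¬ ((p : ℤ) ∣ n)) (c₁ c₂ d₁ d₂ : ℤ)
    (hcong : (p : ℤ) ∣
      ((c₁ ^ 2 + (𝔇 : ℤ) * c₂ ^ 2) * x ^ 2
        + ((𝔇 : ℤ) * (c₁ ^ 2 + (𝔇 : ℤ) * c₂ ^ 2)) * y ^ 2
        + (2 * (c₁ * d₁ + (𝔇 : ℤ) * c₂ * d₂)) * x
        + (2 * (𝔇 : ℤ) * (c₁ * d₂ - c₂ * d₁)) * y
        + ((c₁ ^ 2 + (𝔇 : ℤ) * c₂ ^ 2) + d₁ ^ 2 + (𝔇 : ℤ) * d₂ ^ 2) - n)) :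
    ∃ a b : Rmod 𝔇 p, a * toRmod 𝔇 p d₁ d₂ - b * toRmod 𝔇 p c₁ c₂ = 1 := by
  classical
  obtain ⟨k, hk⟩ := hcong
  have hp' : Prime (p : ℤ) := Int.prime_iff_natAbs_prime.mpr (by simpa using hp)
  obtain ⟨u, v, huv⟩ := (hp'.coprime_iff_not_dvd.mpr hn)
  -- huv : u * p + v * n = 1
  set ω : ZsqrtNeg 𝔇 := AdjoinRoot.root _ with hωdef
  have hroot : ω ^ 2 = -((𝔇 : ℤ) : ZsqrtNeg 𝔇) := by
    have h0 := AdjoinRoot.eval₂_root ((Polynomial.X : Polynomial ℤ) ^ 2 + Polynomial.C (𝔇 : ℤ))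
    simp only [Polynomial.eval₂_add, Polynomial.eval₂_pow, Polynomial.eval₂_X,
      Polynomial.eval₂_C] at h0
    have : (AdjoinRoot.of _) ((𝔇 : ℤ)) = ((𝔇 : ℤ) : ZsqrtNeg 𝔇) := by
      simp [map_intCast]
    rw [this] at h0
    linear_combination h0
  -- components of w = c * (x + y ω) + d
  set W1 : ℤ := c₁ * x - (𝔇 : ℤ) * c₂ * y + d₁ with hW1
  set W2 : ℤ := c₂ * x + c₁ * y + d₂ with hW2
  set T : ℤ := v * k + u with hT
  -- integer identity: v * (N w + N c) = 1 - p * T  … fix signs below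
  have hintZ : v * ((W1 ^ 2 + (𝔇 : ℤ) * W2 ^ 2) + (c₁ ^ 2 + (𝔇 : ℤ) * c₂ ^ 2))
      = 1 + (p : ℤ) * (v * k - u) := by
    rw [hW1, hW2]
    linear_combination v * hk + huv
  have hint := congrArg (fun t : ℤ => (t : ZsqrtNeg 𝔇)) hintZ
  -- norm identities in ZsqrtNeg
  have hnorm : ∀ a b : ℤ, ((a : ZsqrtNeg 𝔇) + (b : ZsqrtNeg 𝔇) * ω) *
      ((a : ZsqrtNeg 𝔇) - (b : ZsqrtNeg 𝔇) * ω)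
      = ((a ^ 2 + (𝔇 : ℤ) * b ^ 2 : ℤ) : ZsqrtNeg 𝔇) := by
    intro a b
    push_cast at hroot ⊢
    linear_combination (-(b : ZsqrtNeg 𝔇) ^ 2) * hroot
  have h1 := hnorm W1 W2
  have h2 := hnorm c₁ c₂
  have hw : ((c₁ : ZsqrtNeg 𝔇) + (c₂ : ZsqrtNeg 𝔇) * ω) * ((x : ZsqrtNeg 𝔇) + (y : ZsqrtNeg 𝔇) * ω)
      + ((d₁ : ZsqrtNeg 𝔇) + (d₂ : ZsqrtNeg 𝔇) * ω)
      = ((W1 : ℤ) : ZsqrtNeg 𝔇) + ((W2 : ℤ) : ZsqrtNeg 𝔇) * ω := by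
    rw [hW1, hW2]
    push_cast at hroot ⊢
    linear_combination ((c₂ : ZsqrtNeg 𝔇) * (y : ZsqrtNeg 𝔇)) * hroot
  set wbar : ZsqrtNeg 𝔇 := ((W1 : ℤ) : ZsqrtNeg 𝔇) - ((W2 : ℤ) : ZsqrtNeg 𝔇) * ω with hwbar
  set a₀ : ZsqrtNeg 𝔇 := (v : ZsqrtNeg 𝔇) * wbar with ha₀
  set b₀ : ZsqrtNeg 𝔇 := -((v : ZsqrtNeg 𝔇) * wbar * ((x : ZsqrtNeg 𝔇) + (y : ZsqrtNeg 𝔇) * ω)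
      + (v : ZsqrtNeg 𝔇) * ((c₁ : ZsqrtNeg 𝔇) - (c₂ : ZsqrtNeg 𝔇) * ω)) with hb₀
  have key : a₀ * ((d₁ : ZsqrtNeg 𝔇) + (d₂ : ZsqrtNeg 𝔇) * ω)
      - b₀ * ((c₁ : ZsqrtNeg 𝔇) + (c₂ : ZsqrtNeg 𝔇) * ω)
      = 1 + ((p : ℤ) : ZsqrtNeg 𝔇) * (((v * k - u : ℤ)) : ZsqrtNeg 𝔇) := by
    rw [ha₀, hb₀, hwbar]
    push_cast at hint h1 h2 hw ⊢
    linear_combination ((v : ZsqrtNeg 𝔇) * (((W1 : ℤ) : ZsqrtNeg 𝔇) - ((W2 : ℤ) : ZsqrtNeg 𝔇) * ω)) * hw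
      + (v : ZsqrtNeg 𝔇) * h1 + (v : ZsqrtNeg 𝔇) * h2 + hint
  refine ⟨Ideal.Quotient.mk _ a₀, Ideal.Quotient.mk _ b₀, ?_⟩
  unfold toRmod
  rw [← hωdef, ← map_mul, ← map_mul, ← map_sub, key]
  have hp0 : (Ideal.Quotient.mk (Ideal.span {(p : ZsqrtNeg 𝔇)})) (((p : ℤ)) : ZsqrtNeg 𝔇) = 0 := by
    rw [Ideal.Quotient.eq_zero_iff_mem]
    have : (((p : ℤ)) : ZsqrtNeg 𝔇) = ((p : ℕ) : ZsqrtNeg 𝔇) := by push_cast; ring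
    rw [this]
    exact Ideal.mem_span_singleton_self _
  rw [map_add, map_one, map_mul, hp0, zero_mul, add_zero]
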